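/- Let A, Q, D, P* be n×n real matrices such that P* is symmetric positive definite, D is positive semidefinite, Q is symmetric, Aᵀ P* + P* A + Q − P* D P* = 0, and let σ > 0 be such that Q − σ P* is positive semidefinite. Let P : ℝ → Matrix (Fin n) (Fin n) ℝ be such that for every t ≥ 0, P(t) is symmetric positive semidefinite and P has derivative Aᵀ P(t) + P(t) A + Q − P(t) D P(t) at t (HasDerivAt). Define V(t) := tr(P*⁻¹ (P(t) − P*) P*⁻¹ (P(t) − P*)). Then V(t) ≤ exp(−2σt) · V(0) for every t ≥ 0. -/

import Mathlib

open Matrix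
open scoped Matrix.Norms.L2Operator

private lemma trace_conjTranspose_mul_self_nonneg' {m : Type*} [Fintype m]
    (M : Matrix m m ℝ) : 0 ≤ (Mᴴ * M).trace := by
  simp only [Matrix.trace, Matrix.diag, Matrix.mul_apply, Matrix.conjTranspose_apply,
    star_trivial]
  exact Finset.sum_nonneg fun j _ => Finset.sum_nonneg fun i _ => mul_self_nonneg _

open scoped MatrixOrder in
private lemma posSemidef_exists_eq_conjTranspose_mul_self' {m : Type*} [Fintype m] [DecidableEq m]
    {A : Matrix m m ℝ} (hA : A.PosSemidef) : ∃ C : Matrix m m ℝ, A = Cᴴ * C := by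
  obtain ⟨X, hX, -, hXA⟩ :=
    CFC.exists_sqrt_of_isSelfAdjoint_of_quasispectrumRestricts hA.isHermitian
      (QuasispectrumRestricts.nnreal_of_nonneg hA.nonneg)
  refine ⟨X, ?_⟩
  rw [← hXA, show Xᴴ = X from hX]

private lemma trace_mul_nonneg' {m : Type*} [Fintype m] [DecidableEq m]
    {A B : Matrix m m ℝ} (hA : A.PosSemidef) (hB : B.PosSemidef) :
    0 ≤ (A * B).trace := by
  obtain ⟨C, rfl⟩ := posSemidef_exists_eq_conjTranspose_mul_self' hA
  obtain ⟨E, rfl⟩ := posSemidef_exists_eq_conjTranspose_mul_self' hB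
  have h1 : (Cᴴ * C * (Eᴴ * E)).trace = ((C * Eᴴ)ᴴ * (C * Eᴴ)).trace := by
    rw [Matrix.conjTranspose_mul, Matrix.conjTranspose_conjTranspose]
    rw [show Cᴴ * C * (Eᴴ * E) = Cᴴ * (C * Eᴴ * E) by noncomm_ring,
      Matrix.trace_mul_comm, mul_assoc, Matrix.trace_mul_comm (C * Eᴴ) (E * Cᴴ)]
  rw [h1]
  exact trace_conjTranspose_mul_self_nonneg' _

private lemma key_ineq {m : Type*} [Fintype m] [DecidableEq m]
    {A Q D Pstar Pt : Matrix m m ℝ}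
    (hPstar : Pstar.PosDef) (hD : D.PosSemidef)
    (hARE : Aᵀ * Pstar + Pstar * A + Q - Pstar * D * Pstar = 0)
    {σ : ℝ} (hQσ : (Q - σ • Pstar).PosSemidef) (hPt : Pt.PosSemidef) :
    2 * (Pstar⁻¹ * (Aᵀ * Pt + Pt * A + Q - Pt * D * Pt) * Pstar⁻¹ * (Pt - Pstar)).trace
      ≤ (-(2 * σ)) * (Pstar⁻¹ * (Pt - Pstar) * Pstar⁻¹ * (Pt - Pstar)).trace := by
  set C : Matrix m m ℝ := Pstar⁻¹ with hC
  set E : Matrix m m ℝ := Pt - Pstar with hE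
  set Ed : Matrix m m ℝ := Aᵀ * Pt + Pt * A + Q - Pt * D * Pt with hEdDef
  have hdet : IsUnit Pstar.det := hPstar.det_pos.ne'.isUnit
  have hCP : C * Pstar = 1 := Matrix.nonsing_inv_mul _ hdet
  have hPC : Pstar * C = 1 := Matrix.mul_nonsing_inv _ hdet
  have hPs : Pstarᵀ = Pstar := by
    have := hPstar.isHermitian
    rwa [Matrix.IsHermitian, Matrix.conjTranspose_eq_transpose_of_trivial] at this
  have hCt : Cᵀ = C := by
    rw [hC, Matrix.transpose_nonsing_inv, hPs]
  have hCH : Cᴴ = C := by rw [Matrix.conjTranspose_eq_transpose_of_trivial, hCt]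
  have hPtt : Ptᵀ = Pt := by
    have := hPt.isHermitian
    rwa [Matrix.IsHermitian, Matrix.conjTranspose_eq_transpose_of_trivial] at this
  have hEt : Eᵀ = E := by rw [hE, Matrix.transpose_sub, hPtt, hPs]
  have hEH : Eᴴ = E := by rw [Matrix.conjTranspose_eq_transpose_of_trivial, hEt]
  have hCpd : C.PosDef := hPstar.inv
  have hEd : Ed = Aᵀ * E + E * A - (Pstar * D * E + E * D * Pstar + E * D * E) := by
    have h : Ed - (Aᵀ * E + E * A - (Pstar * D * E + E * D * Pstar + E * D * E))
        = Aᵀ * Pstar + Pstar * A + Q - Pstar * D * Pstar := by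
      rw [hEdDef, hE]; noncomm_ring
    exact sub_eq_zero.mp (h.trans hARE)
  have hAC : C * Aᵀ + A * C = D - C * Q * C := by
    have h0 : C * (Aᵀ * Pstar + Pstar * A + Q - Pstar * D * Pstar) * C = 0 := by
      rw [hARE]; simp
    have h1 : C * Aᵀ * (Pstar * C) + (C * Pstar) * (A * C) + C * Q * C
        - (C * Pstar) * D * (Pstar * C) = 0 := by
      calc C * Aᵀ * (Pstar * C) + (C * Pstar) * (A * C) + C * Q * C
            - (C * Pstar) * D * (Pstar * C)
          = C * (Aᵀ * Pstar + Pstar * A + Q - Pstar * D * Pstar) * C := by noncomm_ring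
        _ = 0 := h0
    rw [hCP, hPC] at h1
    simp only [mul_one, one_mul] at h1
    refine sub_eq_zero.mp ?_
    calc C * Aᵀ + A * C - (D - C * Q * C)
        = C * Aᵀ + A * C + C * Q * C - D := by abel
      _ = 0 := h1
  have expand : C * Ed * C * E
      = C * (Aᵀ * E) * C * E + C * (E * A) * C * E - C * (Pstar * D * E) * C * E
        - C * (E * D * Pstar) * C * E - C * (E * D * E) * C * E := by
    rw [hEd]; noncomm_ring
  have h12 : (C * (Aᵀ * E) * C * E).trace + (C * (E * A) * C * E).trace
      = (D * (E * C * E)).trace - ((C * Q * C) * (E * C * E)).trace := by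
    have a1 : (C * (Aᵀ * E) * C * E).trace = ((C * Aᵀ) * (E * C * E)).trace := by
      congr 1; noncomm_ring
    have a2 : (C * (E * A) * C * E).trace = ((A * C) * (E * C * E)).trace := by
      rw [show C * (E * A) * C * E = (C * E) * (A * C * E) by noncomm_ring,
        Matrix.trace_mul_comm]
      congr 1; noncomm_ring
    rw [a1, a2, ← Matrix.trace_add, ← add_mul, hAC, sub_mul, Matrix.trace_sub]
  have h3 : (C * (Pstar * D * E) * C * E).trace = (D * (E * C * E)).trace := by
    rw [show C * (Pstar * D * E) * C * E = (C * Pstar) * (D * (E * C * E)) by noncomm_ring,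
      hCP, one_mul]
  have h4 : (C * (E * D * Pstar) * C * E).trace = (D * (E * C * E)).trace := by
    rw [show C * (E * D * Pstar) * C * E = (C * (E * D)) * ((Pstar * C) * E) by noncomm_ring,
      hPC, one_mul, Matrix.trace_mul_comm,
      show E * (C * (E * D)) = (E * C * E) * D by noncomm_ring,
      Matrix.trace_mul_comm]
  have h5 : (C * (E * D * E) * C * E).trace
      = (((C * E) * D * (E * C)) * Pt).trace - (D * (E * C * E)).trace := by
    have e1 : C * (E * D * E) * C * E
        = ((C * E) * D * (E * C)) * Pt - (C * (E * D * E)) * (C * Pstar) := by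
      rw [hE]; noncomm_ring
    rw [e1, Matrix.trace_sub, hCP, mul_one, Matrix.trace_mul_comm C (E * D * E),
      show (E * D * E) * C = E * (D * (E * C)) by noncomm_ring,
      Matrix.trace_mul_comm E (D * (E * C)),
      show (D * (E * C)) * E = D * (E * C * E) by noncomm_ring]
  have hq : ((C * Q * C) * (E * C * E)).trace
      = ((C * (Q - σ • Pstar) * C) * (E * C * E)).trace + σ * (C * E * C * E).trace := by
    have e2 : C * Q * C = C * (Q - σ • Pstar) * C + σ • C := by
      rw [Matrix.mul_sub, Matrix.sub_mul, Matrix.mul_smul, Matrix.smul_mul,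
        show C * Pstar * C = C by rw [hCP, one_mul]]
      abel
    rw [e2, add_mul, Matrix.trace_add, Matrix.smul_mul, Matrix.trace_smul,
      show C * (E * C * E) = C * E * C * E by noncomm_ring, smul_eq_mul]
  have hposQ : ((C * (Q - σ • Pstar) * C)).PosSemidef := by
    have := hQσ.mul_mul_conjTranspose_same C
    rwa [hCH] at this
  have hposE : (E * C * E).PosSemidef := by
    have := hCpd.posSemidef.conjTranspose_mul_mul_same E
    rwa [hEH] at this
  have hposN : ((C * E) * D * (E * C)).PosSemidef := by
    have := hD.conjTranspose_mul_mul_same (E * C)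
    rwa [Matrix.conjTranspose_mul, hCH, hEH] at this
  have t1 : 0 ≤ ((C * (Q - σ • Pstar) * C) * (E * C * E)).trace :=
    trace_mul_nonneg' hposQ hposE
  have t2 : 0 ≤ (((C * E) * D * (E * C)) * Pt).trace :=
    trace_mul_nonneg' hposN hPt
  have hmain : (C * Ed * C * E).trace
      = -(((C * (Q - σ • Pstar) * C) * (E * C * E)).trace) - σ * (C * E * C * E).trace
        - (((C * E) * D * (E * C)) * Pt).trace := by
    rw [expand, Matrix.trace_sub, Matrix.trace_sub, Matrix.trace_sub, Matrix.trace_add,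
      h3, h4, h5]
    linarith [h12, hq]
  rw [hmain]
  nlinarith [t1, t2]

private noncomputable def traceCLM (m : Type*) [Fintype m] [DecidableEq m] :
    Matrix m m ℝ →L[ℝ] ℝ :=
  LinearMap.toContinuousLinearMap (Matrix.traceLinearMap m ℝ ℝ)

/-- Exponential decay of the Lyapunov function along trajectories of the differential
Riccati equation that remain in the positive semidefinite cone:
`V(t) ≤ exp(−2σt) V(0)` for all `t ≥ 0`. -/
theorem riccati_lyapunov_exponential_decay {n : ℕ}
    (A Q D Pstar : Matrix (Fin n) (Fin n) ℝ)
    (hPstar : Pstar.PosDef) (hD : D.PosSemidef) (hQ : Q.IsSymm)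
    (hARE : Aᵀ * Pstar + Pstar * A + Q - Pstar * D * Pstar = 0)
    (σ : ℝ) (hσ : 0 < σ) (hQσ : (Q - σ • Pstar).PosSemidef)
    (P : ℝ → Matrix (Fin n) (Fin n) ℝ)
    (hPsd : ∀ t : ℝ, 0 ≤ t → (P t).PosSemidef)
    (hP : ∀ t : ℝ, 0 ≤ t →
      HasDerivAt P (Aᵀ * P t + P t * A + Q - P t * D * P t) t) :
    ∀ t : ℝ, 0 ≤ t →
      (Pstar⁻¹ * (P t - Pstar) * Pstar⁻¹ * (P t - Pstar)).trace ≤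
        Real.exp (-2 * σ * t) *
          (Pstar⁻¹ * (P 0 - Pstar) * Pstar⁻¹ * (P 0 - Pstar)).trace := by
  intro t ht
  set C : Matrix (Fin n) (Fin n) ℝ := Pstar⁻¹ with hC
  set V : ℝ → ℝ := fun s => (C * (P s - Pstar) * C * (P s - Pstar)).trace with hVdef
  -- derivative of V
  have hVd : ∀ s : ℝ, 0 ≤ s → HasDerivAt V
      (2 * (C * (Aᵀ * P s + P s * A + Q - P s * D * P s) * C * (P s - Pstar)).trace) s := by
    intro s hs
    set Ed : Matrix (Fin n) (Fin n) ℝ := Aᵀ * P s + P s * A + Q - P s * D * P s with hEd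
    have hE : HasDerivAt (fun u => P u - Pstar) Ed s := (hP s hs).sub_const Pstar
    have h1 : HasDerivAt (fun u => C * (P u - Pstar) * C) (C * Ed * C) s :=
      (hE.const_mul C).mul_const C
    have h2 : HasDerivAt (fun u => C * (P u - Pstar) * C * (P u - Pstar))
        (C * Ed * C * (P s - Pstar) + C * (P s - Pstar) * C * Ed) s := h1.mul hE
    have h3 := (traceCLM (Fin n)).hasFDerivAt.comp_hasDerivAt s h2
    have h4 : HasDerivAt V
        ((C * Ed * C * (P s - Pstar)).trace + (C * (P s - Pstar) * C * Ed).trace) s := by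
      simpa [traceCLM, hVdef, Function.comp_def, Matrix.traceLinearMap_apply] using h3
    have hcyc : (C * (P s - Pstar) * C * Ed).trace = (C * Ed * C * (P s - Pstar)).trace := by
      rw [Matrix.trace_mul_comm (C * (P s - Pstar) * C) Ed,
        show Ed * (C * (P s - Pstar) * C) = (Ed * (C * (P s - Pstar))) * C by noncomm_ring,
        Matrix.trace_mul_comm (Ed * (C * (P s - Pstar))) C,
        show C * (Ed * (C * (P s - Pstar))) = C * Ed * C * (P s - Pstar) by noncomm_ring]
    rw [hcyc] at h4
    convert h4 using 1
    ring
  -- the differential inequality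
  have hVle : ∀ s : ℝ, 0 ≤ s →
      2 * (C * (Aᵀ * P s + P s * A + Q - P s * D * P s) * C * (P s - Pstar)).trace
        ≤ (-(2 * σ)) * V s := fun s hs =>
    key_ineq hPstar hD hARE hQσ (hPsd s hs)
  -- Gronwall via monotonicity of g
  set g : ℝ → ℝ := fun s => Real.exp (2 * σ * s) * V s with hgdef
  have hgd : ∀ s : ℝ, 0 ≤ s → HasDerivAt g
      (Real.exp (2 * σ * s) * (2 * σ) * V s
        + Real.exp (2 * σ * s)
          * (2 * (C * (Aᵀ * P s + P s * A + Q - P s * D * P s) * C * (P s - Pstar)).trace)) s := by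
    intro s hs
    have hlin : HasDerivAt (fun u : ℝ => 2 * σ * u) (2 * σ) s := by
      simpa using (hasDerivAt_id s).const_mul (2 * σ)
    exact (hlin.exp.mul (hVd s hs))
  have hganti : AntitoneOn g (Set.Ici (0 : ℝ)) := by
    apply antitoneOn_of_deriv_nonpos (convex_Ici 0)
    · exact fun s hs => ((hgd s hs).continuousAt).continuousWithinAt
    · intro s hs
      rw [interior_Ici] at hs
      exact ((hgd s (le_of_lt hs)).differentiableAt).differentiableWithinAt
    · intro s hs
      rw [interior_Ici] at hs
      rw [(hgd s (le_of_lt hs)).deriv]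
      have h1 := hVle s (le_of_lt hs)
      have h2 := (Real.exp_pos (2 * σ * s)).le
      nlinarith [Real.exp_pos (2 * σ * s)]
  have hg0 : g t ≤ g 0 := hganti Set.self_mem_Ici ht ht
  have hgt0 : g 0 = V 0 := by simp [hgdef]
  have hexp : (0 : ℝ) < Real.exp (2 * σ * t) := Real.exp_pos _
  calc V t = (Real.exp (2 * σ * t))⁻¹ * (Real.exp (2 * σ * t) * V t) := by
        field_simp
    _ ≤ (Real.exp (2 * σ * t))⁻¹ * V 0 := by
        apply mul_le_mul_of_nonneg_left _ (inv_nonneg.mpr hexp.le)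
        rw [hgt0] at hg0; exact hg0
    _ = Real.exp (-2 * σ * t) * V 0 := by
        rw [show (-2 : ℝ) * σ * t = -(2 * σ * t) by ring, Real.exp_neg]
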